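/- arXiv:2501.16862 — 5 statements merged into one kernel-verified Lean document; each statement's English description precedes it below -/
import Mathlib

section
/- For every r > 0 and every real x ≠ 0, if α(x) = r/x + i·x, then |α(x) · sinh(α(x))| ≥ r. -/
open Complex in
lemma sinh_decomp (a b : ℝ) :
    Complex.sinh ((a : ℂ) + Complex.I * b) =
      (Real.sinh a * Real.cos b : ℝ) + (Real.cosh a * Real.sin b : ℝ) * Complex.I := by
  rw [Complex.sinh_add]
  rw [show (Complex.I * (b:ℂ)) = (b:ℂ) * Complex.I by ring]
  rw [Complex.sinh_mul_I, Complex.cosh_mul_I]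
  push_cast [Complex.ofReal_sinh, Complex.ofReal_cosh, Complex.ofReal_cos, Complex.ofReal_sin]
  ring

lemma abs_sinh_ge (a b : ℝ) :
    |Real.sinh a| ≤ ‖Complex.sinh ((a : ℂ) + Complex.I * b)‖ := by
  rw [sinh_decomp]
  rw [← Real.sqrt_sq_eq_abs, Complex.norm_def, Complex.normSq_apply]
  simp only [Complex.add_re, Complex.add_im, Complex.ofReal_re, Complex.ofReal_im,
    Complex.mul_re, Complex.mul_im, Complex.I_re, Complex.I_im]
  apply Real.sqrt_le_sqrt
  have h1 := Real.sin_sq_add_cos_sq b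
  have h2 := Real.cosh_sq a
  nlinarith [sq_nonneg (Real.sin b)]

/-- For every `r > 0` and every real `x ≠ 0`, with `α = r/x + i·x`,
we have `|α · sinh α| ≥ r`. -/
theorem stmt_0 (r x : ℝ) (hr : 0 < r) (hx : x ≠ 0) :
    r ≤ ‖((r : ℂ) / x + Complex.I * x) *
      Complex.sinh ((r : ℂ) / x + Complex.I * x)‖ := by
  have hcast : ((r : ℂ) / x + Complex.I * x) = ((r/x : ℝ) : ℂ) + Complex.I * (x : ℝ) := by
    push_cast; ring
  rw [hcast, norm_mul]
  have h1 : |x| ≤ ‖((r/x : ℝ) : ℂ) + Complex.I * (x : ℝ)‖ := by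
    have := Complex.abs_im_le_norm (((r/x : ℝ) : ℂ) + Complex.I * (x : ℝ))
    simpa using this
  have h2 := abs_sinh_ge (r/x) x
  have h3 : r ≤ |x| * |Real.sinh (r/x)| := by
    have h4 : |r/x| ≤ |Real.sinh (r/x)| := by
      rcases le_or_gt 0 (r/x) with h | h
      · rw [abs_of_nonneg h, abs_of_nonneg (Real.sinh_nonneg_iff.2 h)]
        exact Real.self_le_sinh_iff.2 h
      · rw [abs_of_neg h, abs_of_neg (Real.sinh_neg_iff.2 h), ← Real.sinh_neg]
        exact Real.self_le_sinh_iff.2 (by linarith)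
    calc r = |x| * |r/x| := by rw [abs_div, abs_of_pos hr]; field_simp
      _ ≤ |x| * |Real.sinh (r/x)| := by
          exact mul_le_mul_of_nonneg_left h4 (abs_nonneg x)
  calc r ≤ |x| * |Real.sinh (r/x)| := h3
    _ ≤ _ := mul_le_mul h1 h2 (abs_nonneg _) (norm_nonneg _)
end

section
/- Let P₂ and H be n×n complex matrices with P₂ skew-adjoint (P₂* = −P₂) and invertible, and H self-adjoint and positive definite. Then P₂·H is diagonalizable: there exists an invertible matrix Q and a diagonal matrix Δ with P₂·H = Q⁻¹·Δ·Q. -/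
open Matrix
open scoped ComplexOrder

/-- If `P₂` is skew-adjoint and invertible and `H` is self-adjoint positive
definite, then `P₂ H` is diagonalizable: `P₂ H = Q⁻¹ Δ Q` with `Q` invertible
and `Δ` diagonal. -/
theorem stmt_5 {n : ℕ} (P₂ H : Matrix (Fin n) (Fin n) ℂ)
    (hskew : P₂ᴴ = -P₂) (hP₂ : IsUnit P₂) (hH : H.PosDef) :
    ∃ Q Δ : Matrix (Fin n) (Fin n) ℂ,
      IsUnit Q ∧ Δ.IsDiag ∧ P₂ * H = Q⁻¹ * Δ * Q := by
  set S := (open MatrixOrder in CFC.sqrt H) with hSdef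
  have hSH : S.IsHermitian := (open MatrixOrder in (CFC.sqrt_nonneg H).posSemidef.isHermitian)
  have hSS : S * S = H := (open MatrixOrder in CFC.sqrt_mul_sqrt_self H hH.posSemidef.nonneg)
  have hSunit : IsUnit S := by
    rw [Matrix.isUnit_iff_isUnit_det]
    have : IsUnit (S.det * S.det) := by
      rw [← Matrix.det_mul, hSS]
      exact hH.isUnit.map Matrix.detMonoidHom
    exact (IsUnit.mul_iff.mp this).1
  -- A := S * P₂ * S is skew-adjoint, so I • A is Hermitian
  set A := S * P₂ * S with hAdef
  have hAskew : Aᴴ = -A := by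
    simp only [hAdef, conjTranspose_mul, hskew, hSH.eq]
    noncomm_ring
  have hB : (Complex.I • A).IsHermitian := by
    rw [Matrix.IsHermitian, conjTranspose_smul, hAskew, Complex.star_def,
      Complex.conj_I, neg_smul, smul_neg, neg_neg]
  -- spectral theorem for I • A
  set U : Matrix (Fin n) (Fin n) ℂ := (hB.eigenvectorUnitary : Matrix (Fin n) (Fin n) ℂ) with hUdef
  have hspec := hB.spectral_theorem
  set D := Matrix.diagonal (Complex.ofReal ∘ hB.eigenvalues) with hDdef
  have hUunit : U ∈ Matrix.unitaryGroup (Fin n) ℂ := hB.eigenvectorUnitary.2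
  have hUstar : star U * U = 1 := Matrix.mem_unitaryGroup_iff'.mp hUunit
  have hUstar' : U * star U = 1 := Matrix.mem_unitaryGroup_iff.mp hUunit
  -- A = U * ((-I) • D) * star U
  have hA : A = U * ((-Complex.I) • D) * star U := by
    have h1 : Complex.I • A = U * D * star U := hspec
    have : (-Complex.I) • (Complex.I • A) = A := by
      rw [smul_smul]
      simp [Complex.I_mul_I]
    rw [← this, h1]
    rw [Matrix.mul_smul, Matrix.smul_mul]
  refine ⟨star U * S, (-Complex.I) • D, ?_, ?_, ?_⟩
  · exact ((Unitary.toUnits ⟨U, hUunit⟩).isUnit.star).mul hSunit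
  · exact (Matrix.isDiag_diagonal _).smul _
  · have hinv : (star U * S)⁻¹ = S⁻¹ * U := by
      rw [Matrix.mul_inv_rev]
      congr 1
      rw [Matrix.inv_eq_right_inv hUstar]
    rw [hinv]
    have hSinv : S⁻¹ * S = 1 := Matrix.nonsing_inv_mul _ (Matrix.isUnit_iff_isUnit_det _ |>.mp hSunit)
    calc P₂ * H = S⁻¹ * (S * P₂ * S) * S := by
          rw [← hSS]
          rw [← mul_assoc, ← mul_assoc, ← mul_assoc, hSinv, one_mul, mul_assoc]
      _ = S⁻¹ * (U * ((-Complex.I) • D) * star U) * S := by rw [← hA]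
      _ = S⁻¹ * U * ((-Complex.I) • D) * (star U * S) := by
          simp only [mul_assoc]
end

section
/- Fix μ ∈ ℝ \ {0}, a < b, s ∈ ℂ with Re s > 0, γ ∈ ℂ with γ² = −is/μ, Re γ > 0, sinh(γ(b−a)) ≠ 0. Define the 2×2 matrix G(s) = (i/γ)·[[−coth(γ(b−a)), 1/sinh(γ(b−a))], [1/sinh(γ(b−a)), −coth(γ(b−a))]]. If x₀(ξ) = α e^{γξ} + β e^{−γξ} satisfies s x₀ = iμ x₀'' and (iμ x₀'(b), iμ x₀'(a)) = u₀, then (μ x₀(b), −μ x₀(a)) = G(s) u₀. -/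
open Complex

/-- If `x₀(ξ) = α e^{γξ} + β e^{−γξ}` satisfies `s x₀ = iμ x₀''` and
`(iμ x₀'(b), iμ x₀'(a)) = (u₁,u₂)`, then `(μ x₀(b), −μ x₀(a)) = G(s)(u₁,u₂)`,
where `G(s) = (i/γ)·[[−coth(γ(b−a)), 1/sinh(γ(b−a))],
[1/sinh(γ(b−a)), −coth(γ(b−a))]]`. -/
theorem stmt_12 (μ : ℝ) (hμ : μ ≠ 0) (a b : ℝ) (hab : a < b)
    (s : ℂ) (hs : 0 < s.re) (γ : ℂ) (hγ : γ ^ 2 = -Complex.I * s / μ)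
    (hγre : 0 < γ.re) (hsinh : Complex.sinh (γ * (b - a)) ≠ 0)
    (u₁ u₂ α β : ℂ) (x₀ : ℝ → ℂ)
    (hx : x₀ = fun ξ : ℝ => α * Complex.exp (γ * ξ) + β * Complex.exp (-γ * ξ))
    (hode : ∀ ξ : ℝ, s * x₀ ξ = Complex.I * μ * deriv (deriv x₀) ξ)
    (hu₁ : Complex.I * μ * deriv x₀ b = u₁)
    (hu₂ : Complex.I * μ * deriv x₀ a = u₂) :
    (μ : ℂ) * x₀ b = Complex.I / γ *
        (-(Complex.cosh (γ * (b - a)) / Complex.sinh (γ * (b - a))) * u₁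
          + (Complex.sinh (γ * (b - a)))⁻¹ * u₂) ∧
    -(μ : ℂ) * x₀ a = Complex.I / γ *
        ((Complex.sinh (γ * (b - a)))⁻¹ * u₁
          - Complex.cosh (γ * (b - a)) / Complex.sinh (γ * (b - a)) * u₂) := by
  have hγ0 : γ ≠ 0 := by
    intro h; rw [h] at hγre; simp at hγre
  have hder : ∀ ξ : ℝ, HasDerivAt x₀
      (α * γ * Complex.exp (γ * ξ) - β * γ * Complex.exp (-γ * ξ)) ξ := by
    intro ξ
    have h1 : HasDerivAt (fun z : ℂ => α * Complex.exp (γ * z) + β * Complex.exp (-γ * z))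
        (α * γ * Complex.exp (γ * ξ) - β * γ * Complex.exp (-γ * ξ)) (ξ : ℂ) := by
      have e1 : HasDerivAt (fun z : ℂ => Complex.exp (γ * z))
          (γ * Complex.exp (γ * (ξ:ℂ))) (ξ : ℂ) := by
        simpa [Function.comp_def, mul_comm] using
          (Complex.hasDerivAt_exp (γ * (ξ:ℂ))).comp (ξ:ℂ)
            ((hasDerivAt_id (ξ:ℂ)).const_mul γ)
      have e2 : HasDerivAt (fun z : ℂ => Complex.exp (-γ * z))
          (-γ * Complex.exp (-γ * (ξ:ℂ))) (ξ : ℂ) := by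
        simpa [Function.comp_def, mul_comm] using
          (Complex.hasDerivAt_exp (-γ * (ξ:ℂ))).comp (ξ:ℂ)
            ((hasDerivAt_id (ξ:ℂ)).const_mul (-γ))
      have := (e1.const_mul α).add (e2.const_mul β)
      refine this.congr_deriv ?_
      ring
    rw [hx]
    exact h1.comp_ofReal
  have hd : ∀ ξ : ℝ, deriv x₀ ξ
      = α * γ * Complex.exp (γ * ξ) - β * γ * Complex.exp (-γ * ξ) :=
    fun ξ => (hder ξ).deriv
  rw [hd] at hu₁ hu₂
  rw [hx]
  subst hu₁ hu₂
  have hexp1 := Complex.exp_ne_zero (γ * a)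
  have hexp2 := Complex.exp_ne_zero (γ * b)
  have hba : (((b : ℂ) - a)) = ((b - a : ℝ) : ℂ) := by push_cast; ring
  have hs1 : Complex.sinh (γ * (b - a))
      = (Complex.exp (γ * b) / Complex.exp (γ * a)
        - Complex.exp (γ * a) / Complex.exp (γ * b)) / 2 := by
    rw [Complex.sinh, mul_sub, Complex.exp_sub, neg_sub, Complex.exp_sub]
  have hc1 : Complex.cosh (γ * (b - a))
      = (Complex.exp (γ * b) / Complex.exp (γ * a)
        + Complex.exp (γ * a) / Complex.exp (γ * b)) / 2 := by
    rw [Complex.cosh, mul_sub, Complex.exp_sub, neg_sub, Complex.exp_sub]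
  have hI : (Complex.I : ℂ) ≠ 0 := Complex.I_ne_zero
  have hneg : ∀ t : ℝ, Complex.exp (-γ * t) = (Complex.exp (γ * t))⁻¹ := by
    intro t; rw [← Complex.exp_neg]; ring_nf
  have hsinh' := hsinh
  rw [hs1] at hsinh'
  have hS : Complex.exp (γ * b) * Complex.exp (γ * b)
      - Complex.exp (γ * a) * Complex.exp (γ * a) ≠ 0 := by
    intro h
    apply hsinh'
    rw [div_sub_div _ _ hexp1 hexp2, h]
    simp
  have hS2 : Complex.exp (γ * b) ^ 2 - Complex.exp (γ * a) ^ 2 ≠ 0 := by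
    rw [sq, sq]; exact hS
  constructor <;>
  · rw [hs1, hc1]
    simp only [neg_mul, Complex.exp_neg]
    field_simp
    ring_nf
    simp only [Complex.I_sq]
    ring
end

section
/- Fix μ ∈ ℝ \ {0} and L > 0. For s ∈ ℂ with Re s > 0 let γ(s) be the square root of −is/μ with positive real part and define G(s) = (i/γ(s))·[[−coth(γ(s)L), 1/sinh(γ(s)L)], [1/sinh(γ(s)L), −coth(γ(s)L)]] (whenever sinh(γ(s)L) ≠ 0). Then the entries of G(s) tend to 0 as Re s → ∞: for every ε > 0 there is R such that Re s > R implies each entry of G(s) has absolute value at most ε. -/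
open Complex

lemma aux_sq_abs_sinh (z : ℂ) :
    ‖Complex.sinh z‖ ^ 2 =
      Real.sinh z.re ^ 2 * Real.cos z.im ^ 2 + Real.cosh z.re ^ 2 * Real.sin z.im ^ 2 := by
  have hz : Complex.sinh z =
      (Real.sinh z.re * Real.cos z.im : ℝ) + (Real.cosh z.re * Real.sin z.im : ℝ) * Complex.I := by
    have h0 : z = (z.re : ℂ) + (z.im : ℂ) * Complex.I := (Complex.re_add_im z).symm
    nth_rewrite 1 [h0]
    rw [Complex.sinh_add, Complex.sinh_mul_I, Complex.cosh_mul_I,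
      ← Complex.ofReal_sinh, ← Complex.ofReal_cosh, ← Complex.ofReal_sin, ← Complex.ofReal_cos,
      Complex.ofReal_mul, Complex.ofReal_mul]
    ring
  rw [hz, Complex.sq_norm, Complex.normSq_apply]
  simp [Complex.add_re, Complex.add_im, Complex.mul_re, Complex.mul_im,
    Complex.sinh_ofReal_re, Complex.cos_ofReal_re, Complex.sin_ofReal_re,
    Complex.cosh_ofReal_re]
  ring

lemma aux_abs_re_le_abs_sinh (z : ℂ) : |z.re| ≤ ‖Complex.sinh z‖ := by
  have h1 : |z.re| ≤ |Real.sinh z.re| := by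
    rw [Real.abs_sinh]
    exact Real.self_le_sinh_iff.mpr (abs_nonneg _)
  have h2 : |Real.sinh z.re| ^ 2 ≤ ‖Complex.sinh z‖ ^ 2 := by
    rw [aux_sq_abs_sinh, _root_.sq_abs]
    nlinarith [Real.sin_sq_add_cos_sq z.im, Real.cosh_sq z.re, sq_nonneg (Real.sin z.im)]
  have h3 : |Real.sinh z.re| ≤ ‖Complex.sinh z‖ := by
    have := Real.sqrt_le_sqrt h2
    rwa [Real.sqrt_sq (abs_nonneg _), Real.sqrt_sq (norm_nonneg _)] at this
  linarith

lemma aux_abs_cosh_le (z : ℂ) :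
    ‖Complex.cosh z‖ ≤ 1 + ‖Complex.sinh z‖ := by
  have h : ‖Complex.cosh z‖ ^ 2 ≤ 1 + ‖Complex.sinh z‖ ^ 2 := by
    calc ‖Complex.cosh z‖ ^ 2 = ‖Complex.cosh z ^ 2‖ := by
          rw [norm_pow]
      _ = ‖1 + Complex.sinh z ^ 2‖ := by rw [Complex.cosh_sq, add_comm]
      _ ≤ ‖1‖ + ‖Complex.sinh z ^ 2‖ := norm_add_le _ _
      _ = 1 + ‖Complex.sinh z‖ ^ 2 := by rw [norm_one, norm_pow]
  nlinarith [norm_nonneg (Complex.sinh z), norm_nonneg (Complex.cosh z)]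

/-- The entries of the transfer function
`G(s) = (i/γ(s))·[[−coth(γ(s)L), 1/sinh(γ(s)L)], [1/sinh(γ(s)L), −coth(γ(s)L)]]`
tend to `0` as `Re s → ∞`, where `γ(s)` is the square root of `−is/μ` with
positive real part. -/
theorem stmt_16 (μ : ℝ) (hμ : μ ≠ 0) (L : ℝ) (hL : 0 < L)
    (γ : ℂ → ℂ)
    (hγ : ∀ s : ℂ, 0 < s.re → (γ s) ^ 2 = -Complex.I * s / μ ∧ 0 < (γ s).re) :
    ∀ ε > (0 : ℝ), ∃ R > (0 : ℝ), ∀ s : ℂ, R < s.re →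
      Complex.sinh (γ s * L) ≠ 0 →
        ‖Complex.I / γ s *
            (Complex.cosh (γ s * L) / Complex.sinh (γ s * L))‖ ≤ ε ∧
        ‖Complex.I / γ s * (Complex.sinh (γ s * L))⁻¹‖ ≤ ε := by
  intro ε hε
  have hμ0 : (0 : ℝ) < |μ| := abs_pos.mpr hμ
  refine ⟨max (4 * |μ| / ε ^ 2) (4 * |μ| / (L * ε)) + 1, by positivity, ?_⟩
  intro s hs hsinh
  have hspos : 0 < s.re := by
    have h1 : (0:ℝ) < max (4 * |μ| / ε ^ 2) (4 * |μ| / (L * ε)) + 1 := by positivity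
    linarith
  obtain ⟨hγ2, hγre⟩ := hγ s hspos
  set g := γ s with hg
  have hgne : g ≠ 0 := by
    intro h
    rw [h] at hγre
    simp at hγre
  have hμc : (μ : ℂ) ≠ 0 := by exact_mod_cast hμ
  -- |g|^2 = |s| / |μ|
  have habs_g_sq : ‖g‖ ^ 2 = ‖s‖ / |μ| := by
    rw [← norm_pow, hγ2]
    rw [norm_div, norm_mul]
    simp [Complex.norm_real]
  -- |g| ≥ sqrt (s.re / |μ|)
  have habs_g_lb : Real.sqrt (s.re / |μ|) ≤ ‖g‖ := by
    have h1 : s.re / |μ| ≤ ‖g‖ ^ 2 := by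
      rw [habs_g_sq]
      gcongr
      exact Complex.re_le_norm s
    calc Real.sqrt (s.re / |μ|) ≤ Real.sqrt (‖g‖ ^ 2) := Real.sqrt_le_sqrt h1
      _ = ‖g‖ := by rw [Real.sqrt_sq (norm_nonneg _)]
  set z := g * (L : ℂ) with hzdef
  -- Im (z^2) = -s.re/μ * L^2 , i.e. μ * (z^2).im = -s.re * L^2
  have hz2 : (μ : ℂ) * z ^ 2 = -Complex.I * s * L ^ 2 := by
    rw [hzdef, mul_pow, hγ2]
    field_simp
  have him : μ * (z ^ 2).im = -s.re * L ^ 2 := by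
    have h := congrArg Complex.im hz2
    have e1 : (((L:ℂ))^2).re = L^2 := by simp [pow_two, Complex.mul_re]
    have e2 : (((L:ℂ))^2).im = 0 := by simp [pow_two, Complex.mul_im]
    simp only [Complex.mul_im, Complex.mul_re, Complex.neg_re, Complex.neg_im,
      Complex.I_re, Complex.I_im, Complex.ofReal_re, Complex.ofReal_im, e1, e2] at h
    linarith [h]
  -- |z.re| * |z.im| = s.re * L^2 / (2 |μ|)
  have hprod : |z.re| * |z.im| = s.re * L ^ 2 / (2 * |μ|) := by
    have h1 : (z ^ 2).im = 2 * z.re * z.im := by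
      simp [pow_two, Complex.mul_im]
      ring
    rw [h1] at him
    have h2 : |μ * (2 * z.re * z.im)| = |(-s.re * L ^ 2 : ℝ)| := by rw [him]
    rw [abs_mul, abs_mul, abs_mul, abs_mul, abs_neg] at h2
    have h3 : |(2:ℝ)| = 2 := by norm_num
    rw [h3] at h2
    have h4 : |s.re| = s.re := abs_of_pos hspos
    have h5 : |L ^ 2| = L ^ 2 := abs_of_pos (by positivity)
    rw [h4, h5] at h2
    field_simp
    linarith
  -- key lower bound : |z| * |sinh z| ≥ |z.re| * |z.im|
  have hkey : |z.re| * |z.im| ≤ ‖z‖ * ‖Complex.sinh z‖ := by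
    have h1 : |z.im| ≤ ‖z‖ := Complex.abs_im_le_norm z
    have h2 : |z.re| ≤ ‖Complex.sinh z‖ := aux_abs_re_le_abs_sinh z
    calc |z.re| * |z.im| ≤ ‖Complex.sinh z‖ * ‖z‖ :=
          mul_le_mul h2 h1 (abs_nonneg _) (norm_nonneg _)
      _ = ‖z‖ * ‖Complex.sinh z‖ := mul_comm _ _
  have habs_z : ‖z‖ = ‖g‖ * L := by
    rw [hzdef, norm_mul, Complex.norm_real, Real.norm_eq_abs, abs_of_pos hL]
  -- therefore |g| * |sinh z| ≥ s.re * L / (2|μ|)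
  have hlb : s.re * L / (2 * |μ|) ≤ ‖g‖ * ‖Complex.sinh z‖ := by
    have h1 : s.re * L ^ 2 / (2 * |μ|) ≤ ‖g‖ * L * ‖Complex.sinh z‖ := by
      rw [← habs_z, ← hprod]; exact hkey
    have h2 : ‖g‖ * L * ‖Complex.sinh z‖ =
        (‖g‖ * ‖Complex.sinh z‖) * L := by ring
    rw [h2] at h1
    have h3 : s.re * L ^ 2 / (2 * |μ|) = (s.re * L / (2 * |μ|)) * L := by ring
    rw [h3] at h1
    exact le_of_mul_le_mul_right h1 hL
  have hsinhpos : 0 < ‖Complex.sinh z‖ := by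
    simpa [norm_pos_iff] using hsinh
  have hgpos : 0 < ‖g‖ := norm_pos_iff.mpr hgne
  -- bound 1 : 1/(|g| |sinh z|) ≤ 2|μ|/(L s.re)
  have hb1 : 1 / (‖g‖ * ‖Complex.sinh z‖) ≤ 2 * |μ| / (L * s.re) := by
    rw [div_le_div_iff₀ (by positivity) (by positivity)]
    have := hlb
    calc 1 * (L * s.re) = (s.re * L / (2 * |μ|)) * (2 * |μ|) := by field_simp
      _ ≤ (‖g‖ * ‖Complex.sinh z‖) * (2 * |μ|) := by
          exact mul_le_mul_of_nonneg_right hlb (by positivity)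
      _ = 2 * |μ| * (‖g‖ * ‖Complex.sinh z‖) := by ring
  -- bound 2 : 1/|g| ≤ sqrt(|μ|/s.re)
  have hb2 : 1 / ‖g‖ ≤ Real.sqrt (|μ| / s.re) := by
    rw [div_le_iff₀ hgpos]
    have h1 : Real.sqrt (|μ| / s.re) * Real.sqrt (s.re / |μ|) = 1 := by
      rw [← Real.sqrt_mul (by positivity)]
      rw [show |μ| / s.re * (s.re / |μ|) = 1 by field_simp]
      exact Real.sqrt_one
    calc (1:ℝ) = Real.sqrt (|μ| / s.re) * Real.sqrt (s.re / |μ|) := h1.symm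
      _ ≤ Real.sqrt (|μ| / s.re) * ‖g‖ :=
          mul_le_mul_of_nonneg_left habs_g_lb (Real.sqrt_nonneg _)
  -- numeric bounds from the choice of R
  have hR1 : 4 * |μ| / ε ^ 2 < s.re := lt_of_le_of_lt (le_max_left _ _)
    (by linarith [lt_of_lt_of_le (lt_add_one _) hs.le])
  have hR2 : 4 * |μ| / (L * ε) < s.re := lt_of_le_of_lt (le_max_right _ _)
    (by linarith [lt_of_lt_of_le (lt_add_one _) hs.le])
  have hnum1 : 2 * |μ| / (L * s.re) ≤ ε / 2 := by
    rw [div_le_div_iff₀ (by positivity) (by norm_num)]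
    have : 4 * |μ| / (L * ε) ≤ s.re := hR2.le
    rw [div_le_iff₀ (by positivity)] at this
    nlinarith
  have hnum2 : Real.sqrt (|μ| / s.re) ≤ ε / 2 := by
    rw [show ε / 2 = Real.sqrt ((ε/2)^2) by rw [Real.sqrt_sq (by positivity)]]
    apply Real.sqrt_le_sqrt
    rw [div_le_iff₀ hspos]
    have : 4 * |μ| / ε ^ 2 ≤ s.re := hR1.le
    rw [div_le_iff₀ (by positivity)] at this
    nlinarith
  constructor
  · -- coth entry
    rw [norm_mul, norm_div, norm_div, Complex.norm_I]
    have hcosh : ‖Complex.cosh z‖ ≤ 1 + ‖Complex.sinh z‖ :=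
      aux_abs_cosh_le z
    have h1 : 1 / ‖g‖ * (‖Complex.cosh z‖ / ‖Complex.sinh z‖) ≤
        1 / ‖g‖ * ((1 + ‖Complex.sinh z‖) / ‖Complex.sinh z‖) := by
      gcongr
    have h2 : 1 / ‖g‖ * ((1 + ‖Complex.sinh z‖) / ‖Complex.sinh z‖) =
        1 / (‖g‖ * ‖Complex.sinh z‖) + 1 / ‖g‖ := by
      field_simp
    calc 1 / ‖g‖ * (‖Complex.cosh z‖ / ‖Complex.sinh z‖) ≤
          1 / (‖g‖ * ‖Complex.sinh z‖) + 1 / ‖g‖ := by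
            rw [← h2]; exact h1
      _ ≤ ε / 2 + ε / 2 := add_le_add (hb1.trans hnum1) (hb2.trans hnum2)
      _ = ε := by ring
  · -- 1/sinh entry
    rw [norm_mul, norm_div, norm_inv, Complex.norm_I]
    have h1 : 1 / ‖g‖ * (‖Complex.sinh z‖)⁻¹ =
        1 / (‖g‖ * ‖Complex.sinh z‖) := by
      field_simp
    rw [h1]
    calc 1 / (‖g‖ * ‖Complex.sinh z‖) ≤ 2 * |μ| / (L * s.re) := hb1
      _ ≤ ε / 2 := hnum1
      _ ≤ ε := by linarith
end

section
/- Let B₁, C₁ be m×m complex matrices and suppose there exist matrices B₂, C₂ such that the 2m×2m block matrix [[B₁, B₂],[C₁, C₂]] is invertible. If a sequence of m×m matrices Gₖ satisfies ‖Gₖ‖ ≤ M for all k, Eₖ → 0, and Gₖ·(B₁ + B₂·Eₖ) = C₁ + C₂·Eₖ for all k, then ker B₁ = {0}, i.e., B₁ is invertible. -/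
open Matrix

/-- If the block matrix `[[B₁,B₂],[C₁,C₂]]` is invertible and there are
matrices `Gₖ`, uniformly bounded (entrywise), and `Eₖ → 0` with
`Gₖ (B₁ + B₂ Eₖ) = C₁ + C₂ Eₖ` for all `k`, then `B₁` is invertible. -/
theorem stmt_18 {m : ℕ} (B₁ B₂ C₁ C₂ : Matrix (Fin m) (Fin m) ℂ)
    (hblock : IsUnit (Matrix.fromBlocks B₁ B₂ C₁ C₂))
    (G E : ℕ → Matrix (Fin m) (Fin m) ℂ) (M : ℝ)
    (hG : ∀ k i j, ‖G k i j‖ ≤ M)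
    (hE : Filter.Tendsto E Filter.atTop (nhds 0))
    (heq : ∀ k, G k * (B₁ + B₂ * E k) = C₁ + C₂ * E k) :
    IsUnit B₁ := by
  rw [Matrix.isUnit_iff_isUnit_det, isUnit_iff_ne_zero]
  intro hdet
  obtain ⟨v, hv, hBv⟩ := Matrix.exists_mulVec_eq_zero_iff.mpr hdet
  set w : ℕ → Fin m → ℂ := fun k => (E k).mulVec v with hw
  have hEij : ∀ i j, Filter.Tendsto (fun k => E k i j) Filter.atTop (nhds 0) := by
    intro i j
    have h1 := (tendsto_pi_nhds.mp hE) i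
    have h2 := (tendsto_pi_nhds.mp h1) j
    simpa using h2
  have hwlim : ∀ j, Filter.Tendsto (fun k => w k j) Filter.atTop (nhds 0) := by
    intro j
    have h : Filter.Tendsto (fun k => ∑ l, E k j l * v l) Filter.atTop
        (nhds (∑ _l : Fin m, 0)) :=
      tendsto_finset_sum _ fun l _ => by simpa using (hEij j l).mul tendsto_const_nhds
    simpa [w, Matrix.mulVec, dotProduct] using h
  have hCw : ∀ (A : Matrix (Fin m) (Fin m) ℂ) (j : Fin m),
      Filter.Tendsto (fun k => A.mulVec (w k) j) Filter.atTop (nhds 0) := by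
    intro A j
    have h : Filter.Tendsto (fun k => ∑ l, A j l * w k l) Filter.atTop
        (nhds (∑ _l : Fin m, 0)) :=
      tendsto_finset_sum _ fun l _ => by simpa using (hwlim l).const_mul (A j l)
    simpa [Matrix.mulVec, dotProduct] using h
  have hL : ∀ i, Filter.Tendsto (fun k => (G k).mulVec (B₂.mulVec (w k)) i)
      Filter.atTop (nhds 0) := by
    intro i
    have hbound : ∀ k, ‖(G k).mulVec (B₂.mulVec (w k)) i‖ ≤
        ∑ j, max M 0 * ‖B₂.mulVec (w k) j‖ := by
      intro k
      calc ‖(G k).mulVec (B₂.mulVec (w k)) i‖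
          = ‖∑ j, G k i j * B₂.mulVec (w k) j‖ := by
            simp [Matrix.mulVec, dotProduct]
        _ ≤ ∑ j, ‖G k i j * B₂.mulVec (w k) j‖ := norm_sum_le _ _
        _ ≤ ∑ j, max M 0 * ‖B₂.mulVec (w k) j‖ := by
            refine Finset.sum_le_sum fun j _ => ?_
            rw [norm_mul]
            refine mul_le_mul_of_nonneg_right ?_ (norm_nonneg _)
            exact le_max_of_le_left (hG k i j)
    refine squeeze_zero_norm hbound ?_
    have h : Filter.Tendsto (fun k => ∑ j, max M 0 * ‖B₂.mulVec (w k) j‖)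
          Filter.atTop (nhds (∑ _j : Fin m, max M 0 * ‖(0:ℂ)‖)) :=
      tendsto_finset_sum _ fun j _ => ((hCw B₂ j).norm).const_mul _
    simpa using h
  have hid : ∀ k, (G k).mulVec (B₂.mulVec (w k)) = C₁.mulVec v + C₂.mulVec (w k) := by
    intro k
    have h := congrArg (fun A => A.mulVec v) (heq k)
    simpa [Matrix.add_mulVec, ← Matrix.mulVec_mulVec, hBv, w] using h
  have hC₁v : C₁.mulVec v = 0 := by
    have h1 : Filter.Tendsto (fun k => (G k).mulVec (B₂.mulVec (w k)))
        Filter.atTop (nhds 0) := by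
      rw [tendsto_pi_nhds]
      intro i
      simpa using hL i
    have h2 : Filter.Tendsto (fun k => C₁.mulVec v + C₂.mulVec (w k))
        Filter.atTop (nhds (C₁.mulVec v)) := by
      rw [tendsto_pi_nhds]
      intro i
      have := (hCw C₂ i).const_add (C₁.mulVec v i)
      simpa using this
    have h1' : Filter.Tendsto (fun k => C₁.mulVec v + C₂.mulVec (w k))
        Filter.atTop (nhds 0) := by
      refine h1.congr fun k => hid k
    have := tendsto_nhds_unique h1' h2
    simp [this]
  -- use block invertibility
  obtain ⟨U, hU⟩ := hblock
  have hinv : (↑U⁻¹ : Matrix (Fin m ⊕ Fin m) (Fin m ⊕ Fin m) ℂ) *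
      Matrix.fromBlocks B₁ B₂ C₁ C₂ = 1 := by
    rw [← hU]; exact U.inv_mul
  have hu0 : (Matrix.fromBlocks B₁ B₂ C₁ C₂).mulVec (Sum.elim v 0) = 0 := by
    rw [Matrix.fromBlocks_mulVec]
    simp [hBv, hC₁v]
  have : Sum.elim v (0 : Fin m → ℂ) = 0 := by
    have h : ((↑U⁻¹ : Matrix (Fin m ⊕ Fin m) (Fin m ⊕ Fin m) ℂ) *
        Matrix.fromBlocks B₁ B₂ C₁ C₂).mulVec (Sum.elim v 0) = 0 := by
      rw [← Matrix.mulVec_mulVec, hu0, Matrix.mulVec_zero]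
    rw [hinv, Matrix.one_mulVec] at h
    exact h
  apply hv
  funext j
  have := congrFun this (Sum.inl j)
  simpa using this
end
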